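/- Let Z and Z' be tails of a nodal curve C such that #(Term_Z ∩ Term_{Z'}) = k_Z − 1. Then the pair (Z,Z') is perfect, i.e. one of the following holds: Z ⊆ Z', Z' ⊆ Z, Z^c ⊆ Z', or Z' ⊆ Z^c. -/
import Mathlib


open Set

/- Dual multigraph model of a nodal curve: vertices `V` are irreducible
components, edges `E` are nodes, with endpoint maps `s t : E → V`. -/

/-- The set of terminal points (edges of the cut) of a vertex subset `Z`. -/
def TermPts {V E : Type} (s t : E → V) (Z : Set V) : Set E :=
  {e | (s e ∈ Z ∧ t e ∉ Z) ∨ (t e ∈ Z ∧ s e ∉ Z)}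

/-- A subcurve is a nonempty proper subset of the components. -/
def Subcurve {V : Type} (Z : Set V) : Prop := Z.Nonempty ∧ Z ≠ Set.univ

/-- Connectivity of the induced sub-multigraph on `Z`. -/
def ConnOn {V E : Type} (s t : E → V) (Z : Set V) : Prop :=
  ∀ x ∈ Z, ∀ y ∈ Z,
    Relation.ReflTransGen
      (fun a b => a ∈ Z ∧ b ∈ Z ∧ ∃ e, (s e = a ∧ t e = b) ∨ (s e = b ∧ t e = a)) x y

/-- A tail is a subcurve with both sides connected. -/
def IsTail {V E : Type} (s t : E → V) (Z : Set V) : Prop :=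
  Subcurve Z ∧ ConnOn s t Z ∧ ConnOn s t Zᶜ

/-- `k_Z`, the number of terminal points of `Z`. -/
noncomputable def kcut {V E : Type} (s t : E → V) (Z : Set V) : ℕ :=
  (TermPts s t Z).ncard

/-- The pair `(Z, Z')` is free if the edge cuts are disjoint. -/
def FreePair {V E : Type} (s t : E → V) (Z Z' : Set V) : Prop :=
  TermPts s t Z ∩ TermPts s t Z' = ∅

/-- The pair `(Z, Z')` is perfect. -/
def PerfectPair {V : Type} (Z Z' : Set V) : Prop :=
  Z ⊆ Z' ∨ Z' ⊆ Z ∨ Zᶜ ⊆ Z' ∨ Z' ⊆ Zᶜ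

lemma crossing_edge {V E : Type} (s t : E → V) (W P : Set V)
    (hW : ConnOn s t W) {x y : V} (hx : x ∈ W) (hy : y ∈ W)
    (hxP : x ∈ P) (hyP : y ∉ P) :
    ∃ e, s e ∈ W ∧ t e ∈ W ∧ ((s e ∈ P ∧ t e ∉ P) ∨ (t e ∈ P ∧ s e ∉ P)) := by
  have key : ∀ z, Relation.ReflTransGen
      (fun a b => a ∈ W ∧ b ∈ W ∧ ∃ e, (s e = a ∧ t e = b) ∨ (s e = b ∧ t e = a)) x z →
      z ∉ P → ∃ e, s e ∈ W ∧ t e ∈ W ∧ ((s e ∈ P ∧ t e ∉ P) ∨ (t e ∈ P ∧ s e ∉ P)) := by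
    intro z hchain
    induction hchain with
    | refl => intro hc; exact absurd hxP hc
    | @tail m z h' hstep ih =>
      intro hzP
      obtain ⟨hbW, hcW, e, he⟩ := hstep
      by_cases hb : m ∈ P
      · refine ⟨e, ?_, ?_, ?_⟩ <;>
          rcases he with ⟨hs, ht⟩ | ⟨hs, ht⟩ <;> subst hs <;> subst ht
        · exact hbW
        · exact hcW
        · exact hcW
        · exact hbW
        · exact Or.inl ⟨hb, hzP⟩
        · exact Or.inr ⟨hb, hzP⟩
      · exact ih hb
  exact key y (hW x hx y hy) hyP

/-- Lemma 3.4 (ii): if `Z, Z'` are tails and `#(Term_Z ∩ Term_{Z'}) = k_Z - 1`,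
then the pair `(Z, Z')` is perfect. -/
theorem stmt_7 {V E : Type} [Fintype V] [Fintype E] (s t : E → V)
    (hC : ConnOn s t Set.univ) (Z Z' : Set V)
    (hZ : IsTail s t Z) (hZ' : IsTail s t Z')
    (h : (TermPts s t Z ∩ TermPts s t Z').ncard = kcut s t Z - 1) :
    PerfectPair Z Z' := by
  by_contra hperf
  unfold PerfectPair at hperf
  push_neg at hperf
  obtain ⟨h1, h2, h3, h4⟩ := hperf
  rw [Set.not_subset] at h1 h2 h3 h4
  obtain ⟨b, hbZ, hbZ'⟩ := h1      -- b ∈ Z, b ∉ Z'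
  obtain ⟨c, hcZ', hcZ⟩ := h2      -- c ∈ Z', c ∉ Z
  obtain ⟨d, hdZc, hdZ'⟩ := h3     -- d ∈ Zᶜ, d ∉ Z'
  obtain ⟨a, haZ', haZc⟩ := h4     -- a ∈ Z', a ∉ Zᶜ
  have haZ : a ∈ Z := by simpa using haZc
  -- crossing edge inside Z'
  obtain ⟨e1, he1s, he1t, he1X⟩ :=
    crossing_edge s t Z' Z hZ'.2.1 haZ' hcZ' haZ hcZ
  -- crossing edge inside Z'ᶜ
  have hbZ'c : b ∈ Z'ᶜ := hbZ'
  have hdZ'c : d ∈ Z'ᶜ := hdZ'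
  obtain ⟨e2, he2s, he2t, he2X⟩ :=
    crossing_edge s t Z'ᶜ Z hZ'.2.2 hbZ'c hdZ'c hbZ (by simpa using hdZc)
  have hne : e1 ≠ e2 := by
    intro hEq
    rw [hEq] at he1s
    exact he2s he1s
  have hmem1 : e1 ∈ TermPts s t Z \ TermPts s t Z' := by
    constructor
    · exact he1X
    · intro hcon
      rcases hcon with ⟨_, hns⟩ | ⟨_, hns⟩
      · exact hns he1t
      · exact hns he1s
  have hmem2 : e2 ∈ TermPts s t Z \ TermPts s t Z' := by
    constructor
    · exact he2X
    · intro hcon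
      rcases hcon with ⟨hns, _⟩ | ⟨hns, _⟩
      · exact he2s hns
      · exact he2t hns
  have hsub : ({e1, e2} : Set E) ⊆ TermPts s t Z \ TermPts s t Z' := by
    intro x hx
    rcases hx with rfl | rfl
    · exact hmem1
    · exact hmem2
  have hcard2 : 2 ≤ (TermPts s t Z \ TermPts s t Z').ncard := by
    have := Set.ncard_le_ncard hsub (Set.toFinite _)
    rwa [Set.ncard_pair hne] at this
  have hintsub : TermPts s t Z ∩ TermPts s t Z' ⊆ TermPts s t Z :=
    Set.inter_subset_left
  have hdiff : (TermPts s t Z \ TermPts s t Z').ncard =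
      kcut s t Z - (TermPts s t Z ∩ TermPts s t Z').ncard := by
    rw [← Set.diff_self_inter]
    exact Set.ncard_diff hintsub (Set.toFinite _)
  have hle : (TermPts s t Z ∩ TermPts s t Z').ncard ≤ kcut s t Z :=
    Set.ncard_le_ncard hintsub (Set.toFinite _)
  omega
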